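/- (Phase diagram for FDR thresholding.) In the ARW model with parameters 0 < r < β < 1, let q₂ = (β+r)²/(4r) and consider the FDR-type threshold t_p(q₂) = √(2q₂ log p). If r > (1−√(1−β))² then √p · Sep(t_p(q₂); ε_p, τ_p) → ∞ as p → ∞, while if r < (1−√(1−β))² then √p · Sep(t_p(q₂); ε_p, τ_p) → 0 as p → ∞. Hence the success region of FDR thresholding is r > (1−√(1−β))², which is strictly smaller than the success region r > ρ*(β) of ideal thresholding when 1/2 < β < 3/4. -/

import Mathlib

open Filter Set MeasureTheory

noncomputable def gaussPDF (t : ℝ) : ℝ := (Real.sqrt (2 * Real.pi))⁻¹ * Real.exp (-(t ^ 2) / 2)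

/-- standard normal CDF Φ -/
noncomputable def normCDF (t : ℝ) : ℝ := ∫ x in Set.Iic t, gaussPDF x

/-- survival function of |N(τ,1)| -/
noncomputable def psiBar (τ t : ℝ) : ℝ := (1 - normCDF (t - τ)) + normCDF (-t - τ)

noncomputable def tprFn (ε τ t : ℝ) : ℝ := ε * psiBar τ t

noncomputable def fprFn (ε t : ℝ) : ℝ := (1 - ε) * psiBar 0 t

noncomputable def idrFn (ε τ t : ℝ) : ℝ := ε * normCDF (-t - τ)

/-- clipping proxy separation -/
noncomputable def sepFn (ε τ t : ℝ) : ℝ :=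
  2 * τ * (tprFn ε τ t - 2 * idrFn ε τ t) / Real.sqrt (tprFn ε τ t + fprFn ε t)

/-- proxy false discovery rate -/
noncomputable def fdrFn (ε τ t : ℝ) : ℝ := fprFn ε t / (tprFn ε τ t + fprFn ε t)

/-- magnitude of derivative of TPR -/
noncomputable def tprD (ε τ t : ℝ) : ℝ := ε * (gaussPDF (t - τ) + gaussPDF (t + τ))

/-- magnitude of derivative of FPR -/
noncomputable def fprD (ε t : ℝ) : ℝ := 2 * (1 - ε) * gaussPDF t

/-- proxy local false discovery rate -/
noncomputable def lfdrFn (ε τ t : ℝ) : ℝ := fprD ε t / (tprD ε τ t + fprD ε t)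

noncomputable def rhoStar (β : ℝ) : ℝ :=
  if β ≤ 1 / 2 then 0 else if β ≤ 3 / 4 then β - 1 / 2 else (1 - Real.sqrt (1 - β)) ^ 2

noncomputable def qStar (r β : ℝ) : ℝ := if r ≤ β / 3 then 4 * r else (β + r) ^ 2 / (4 * r)

/-- sparsity ε_p = p^{-β} in the ARW model -/
noncomputable def epsP (β : ℝ) (p : ℕ) : ℝ := (p : ℝ) ^ (-β)

/-- strength τ_p = √(2 r log p) in the ARW model -/
noncomputable def tauP (r : ℝ) (p : ℕ) : ℝ := Real.sqrt (2 * r * Real.log p)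

/-- threshold t_p(q) = √(2 q log p) -/
noncomputable def tP (q : ℝ) (p : ℕ) : ℝ := Real.sqrt (2 * q * Real.log p)

/-- folded two-point mixture G_{ε,τ} -/
noncomputable def gMix (ε τ t : ℝ) : ℝ :=
  (1 - ε) * (normCDF t - normCDF (-t)) + ε * (normCDF (t - τ) - normCDF (-t - τ))

/-- ideal HC objective -/
noncomputable def hcObj (ε τ t : ℝ) : ℝ :=
  ((1 - gMix ε τ t) - psiBar 0 t) / Real.sqrt (gMix ε τ t * (1 - gMix ε τ t))

/-- useful feature discovery exponent δ(q) -/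
noncomputable def deltaExp (β r q : ℝ) : ℝ :=
  if q ≤ r then 1 - β else 1 - β - (Real.sqrt q - Real.sqrt r) ^ 2

/-- separation growth exponent γ(q) -/
noncomputable def gammaExp (β r q : ℝ) : ℝ :=
  deltaExp β r q - max (1 - q) (deltaExp β r q) / 2

lemma gaussPDF_pos (t : ℝ) : 0 < gaussPDF t := by
  unfold gaussPDF
  positivity

lemma gaussPDF_eq (t : ℝ) : gaussPDF t = (Real.sqrt (2*Real.pi))⁻¹ * Real.exp (-(1/2) * t^2) := by
  unfold gaussPDF; ring_nf

lemma integrable_gaussPDF : Integrable gaussPDF := by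
  have : Integrable (fun t : ℝ => (Real.sqrt (2*Real.pi))⁻¹ * Real.exp (-(1/2) * t^2)) :=
    (integrable_exp_neg_mul_sq (by norm_num)).const_mul _
  exact this.congr (by filter_upwards with t using (gaussPDF_eq t).symm)

lemma integral_gaussPDF : ∫ x, gaussPDF x = 1 := by
  simp_rw [gaussPDF_eq]
  rw [MeasureTheory.integral_const_mul, integral_gaussian]
  rw [← Real.sqrt_inv, show Real.pi/(1/2) = 2*Real.pi by ring,
    ← Real.sqrt_mul (by positivity), inv_mul_cancel₀ (by positivity), Real.sqrt_one]

lemma gaussPDF_neg (t : ℝ) : gaussPDF (-t) = gaussPDF t := by unfold gaussPDF; ring_nf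

lemma normCDF_add_survival (t : ℝ) : normCDF t + ∫ x in Ioi t, gaussPDF x = 1 := by
  rw [normCDF, ← integral_gaussPDF]
  have := MeasureTheory.integral_add_compl (measurableSet_Iic (a := t)) integrable_gaussPDF
  rw [Set.compl_Iic] at this
  exact this

lemma survival_eq (t : ℝ) : 1 - normCDF t = ∫ x in Ioi t, gaussPDF x := by
  have := normCDF_add_survival t; linarith

lemma normCDF_neg (t : ℝ) : normCDF (-t) = 1 - normCDF t := by
  rw [survival_eq, normCDF]
  have : ∀ x : ℝ, gaussPDF x = gaussPDF (-x) := fun x => (gaussPDF_neg x).symm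
  calc ∫ x in Iic (-t), gaussPDF x = ∫ x in Iic (-t), gaussPDF (-x) := by
        exact setIntegral_congr_fun measurableSet_Iic (fun x _ => this x)
    _ = ∫ x in Ioi t, gaussPDF x := by rw [integral_comp_neg_Iic]; norm_num

lemma normCDF_mono : Monotone normCDF := by
  intro a b hab
  rw [normCDF, normCDF]
  apply setIntegral_mono_set integrable_gaussPDF.integrableOn
    (Filter.Eventually.of_forall fun x => (gaussPDF_pos x).le)
  exact HasSubset.Subset.eventuallyLE (Iic_subset_Iic.mpr hab)

lemma survival_pos (t : ℝ) : 0 < 1 - normCDF t := by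
  rw [survival_eq]
  refine (setIntegral_pos_iff_support_of_nonneg_ae
      (Filter.Eventually.of_forall fun x => (gaussPDF_pos x).le)
      integrable_gaussPDF.integrableOn).mpr ?_
  have hsupp : Function.support gaussPDF = Set.univ :=
    Set.eq_univ_of_forall fun x => (gaussPDF_pos x).ne'
  rw [hsupp, Set.univ_inter]
  exact MeasureTheory.Measure.measure_Ioi_pos volume t

lemma normCDF_pos (t : ℝ) : 0 < normCDF t := by
  have := survival_pos (-t); rw [normCDF_neg] at this; linarith

lemma normCDF_lt_one (t : ℝ) : normCDF t < 1 := by have := survival_pos t; linarith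

lemma normCDF_nonneg (t : ℝ) : 0 ≤ normCDF t := (normCDF_pos t).le

lemma setIntegral_Ioi_shift (f : ℝ → ℝ) (a : ℝ) :
    ∫ x in Ioi a, f (x - a) = ∫ x in Ioi 0, f x := by
  have A : MeasurableEmbedding (fun x : ℝ => x + -a) :=
    (Homeomorph.addRight (-a)).isClosedEmbedding.measurableEmbedding
  have h := A.setIntegral_map (μ := volume) f (Ioi 0)
  rw [map_add_right_eq_self volume (-a)] at h
  have hpre : (fun x : ℝ => x + -a) ⁻¹' Ioi 0 = Ioi a := by
    ext x; simp only [Set.mem_preimage, Set.mem_Ioi]; constructor <;> intro h <;> linarith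
  rw [hpre] at h
  rw [h]
  exact setIntegral_congr_fun measurableSet_Ioi fun x _ => by rw [sub_eq_add_neg]

lemma normCDF_zero : normCDF 0 = 1/2 := by
  have := normCDF_neg 0; rw [neg_zero] at this; linarith

lemma integral_Ioi_zero_gaussPDF : ∫ x in Ioi (0:ℝ), gaussPDF x = 1/2 := by
  rw [← survival_eq, normCDF_zero]; norm_num

lemma survival_le {x : ℝ} (hx : 0 ≤ x) : 1 - normCDF x ≤ (1/2) * Real.exp (-(x^2)/2) := by
  rw [survival_eq]
  have key : ∀ t ∈ Ioi x, gaussPDF t ≤ Real.exp (-(x^2)/2) * gaussPDF (t - x) := by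
    intro t ht
    simp only [Set.mem_Ioi] at ht
    unfold gaussPDF
    rw [mul_comm (Real.exp _), mul_assoc, ← Real.exp_add]
    apply mul_le_mul_of_nonneg_left _ (by positivity)
    apply Real.exp_le_exp.mpr
    nlinarith [mul_nonneg hx (le_of_lt (sub_pos.mpr ht))]
  calc (∫ t in Ioi x, gaussPDF t)
      ≤ ∫ t in Ioi x, Real.exp (-(x^2)/2) * gaussPDF (t - x) := by
        apply setIntegral_mono_on integrable_gaussPDF.integrableOn
          (((integrable_gaussPDF.comp_sub_right x).const_mul _).integrableOn)
          measurableSet_Ioi key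
    _ = Real.exp (-(x^2)/2) * ∫ t in Ioi x, gaussPDF (t - x) := by
        rw [MeasureTheory.integral_const_mul]
    _ = Real.exp (-(x^2)/2) * (1/2) := by
        rw [setIntegral_Ioi_shift, integral_Ioi_zero_gaussPDF]
    _ = (1/2) * Real.exp (-(x^2)/2) := by ring

lemma survival_ge {x : ℝ} (hx : 1 ≤ x) :
    Real.exp (-(3:ℝ)/2) * gaussPDF x / x ≤ 1 - normCDF x := by
  have hx0 : 0 < x := lt_of_lt_of_le one_pos hx
  rw [survival_eq]
  have h1 : x⁻¹ * gaussPDF (x + x⁻¹) ≤ ∫ t in Ioc x (x + x⁻¹), gaussPDF t := by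
    have hc : (∫ _ in Ioc x (x + x⁻¹), gaussPDF (x + x⁻¹)) = x⁻¹ * gaussPDF (x + x⁻¹) := by
      rw [setIntegral_const, Measure.real, Real.volume_Ioc, ENNReal.toReal_ofReal (by linarith [inv_pos.mpr hx0])]
      simp [smul_eq_mul]
    rw [← hc]
    apply setIntegral_mono_on ((integrableOn_const_iff).mpr (Or.inr (by rw [Real.volume_Ioc]; exact ENNReal.ofReal_lt_top)))
      integrable_gaussPDF.integrableOn measurableSet_Ioc
    intro t ht
    simp only [Set.mem_Ioc] at ht
    unfold gaussPDF
    apply mul_le_mul_of_nonneg_left _ (by positivity)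
    apply Real.exp_le_exp.mpr
    have h2 : t ≤ x + x⁻¹ := ht.2
    have h3 : 0 < t := lt_trans hx0 ht.1
    nlinarith [inv_pos.mpr hx0]
  have h2 : (∫ t in Ioc x (x + x⁻¹), gaussPDF t) ≤ ∫ t in Ioi x, gaussPDF t := by
    apply setIntegral_mono_set integrable_gaussPDF.integrableOn
      (Filter.Eventually.of_forall fun t => (gaussPDF_pos t).le)
    exact HasSubset.Subset.eventuallyLE (Set.Ioc_subset_Ioi_self)
  have h3 : Real.exp (-(3:ℝ)/2) * gaussPDF x ≤ gaussPDF (x + x⁻¹) := by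
    unfold gaussPDF
    rw [← mul_assoc, mul_comm (Real.exp _), mul_assoc, ← Real.exp_add]
    apply mul_le_mul_of_nonneg_left _ (by positivity)
    apply Real.exp_le_exp.mpr
    have hinv : x⁻¹ ≤ 1 := by rw [inv_le_one_iff₀]; right; exact hx
    have hxx : x * x⁻¹ = 1 := mul_inv_cancel₀ (ne_of_gt hx0)
    have hinv0 : 0 < x⁻¹ := inv_pos.mpr hx0
    nlinarith [sq_nonneg x⁻¹]
  calc Real.exp (-(3:ℝ)/2) * gaussPDF x / x = x⁻¹ * (Real.exp (-(3:ℝ)/2) * gaussPDF x) := by ring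
    _ ≤ x⁻¹ * gaussPDF (x + x⁻¹) := by
        apply mul_le_mul_of_nonneg_left h3 (le_of_lt (inv_pos.mpr hx0))
    _ ≤ _ := le_trans h1 h2

lemma sqrt_exp' (x : ℝ) : Real.sqrt (Real.exp x) = Real.exp (x/2) := by
  rw [show Real.exp x = Real.exp (x/2) ^ 2 by rw [sq, ← Real.exp_add]; ring_nf]
  exact Real.sqrt_sq (Real.exp_pos _).le

lemma psiBar_pos (τ t : ℝ) : 0 < psiBar τ t :=
  add_pos_of_pos_of_nonneg (survival_pos _) (normCDF_nonneg _)

lemma psiBar_le {τ t : ℝ} (hτ : 0 ≤ τ) (h : τ ≤ t) :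
    psiBar τ t ≤ Real.exp (-(t - τ)^2/2) := by
  unfold psiBar
  have h1 : 1 - normCDF (t - τ) ≤ (1/2) * Real.exp (-(t-τ)^2/2) := survival_le (by linarith)
  have h2 : normCDF (-t - τ) ≤ (1/2) * Real.exp (-(t-τ)^2/2) := by
    rw [show -t - τ = -(t+τ) by ring, normCDF_neg]
    calc 1 - normCDF (t+τ) ≤ (1/2) * Real.exp (-(t+τ)^2/2) := survival_le (by linarith)
      _ ≤ (1/2) * Real.exp (-(t-τ)^2/2) := by
          apply mul_le_mul_of_nonneg_left _ (by norm_num)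
          apply Real.exp_le_exp.mpr; nlinarith
  linarith

lemma num_eq (ε τ t : ℝ) : tprFn ε τ t - 2 * idrFn ε τ t
    = ε * ((1 - normCDF (t - τ)) - normCDF (-t - τ)) := by
  unfold tprFn idrFn psiBar; ring

lemma num_lb {ε τ t : ℝ} (hε : 0 ≤ ε) (hτ : 0 ≤ τ) (h1 : 1 ≤ t - τ) :
    ε * (Real.exp (-(3:ℝ)/2) * gaussPDF (t - τ) / (t - τ) - (1/2) * Real.exp (-(t+τ)^2/2))
      ≤ tprFn ε τ t - 2 * idrFn ε τ t := by
  rw [num_eq]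
  apply mul_le_mul_of_nonneg_left _ hε
  have hA := survival_ge h1
  have hB : normCDF (-t - τ) ≤ (1/2) * Real.exp (-(t+τ)^2/2) := by
    rw [show -t - τ = -(t+τ) by ring, normCDF_neg]
    exact survival_le (by linarith)
  linarith

lemma num_ub {ε τ t : ℝ} (hε : 0 ≤ ε) :
    tprFn ε τ t - 2 * idrFn ε τ t ≤ tprFn ε τ t := by
  have : 0 ≤ idrFn ε τ t := mul_nonneg hε (normCDF_nonneg _)
  linarith

lemma num_nonneg {ε τ t : ℝ} (hε : 0 ≤ ε) (hτ : 0 ≤ τ) (ht : 0 ≤ t) :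
    0 ≤ tprFn ε τ t - 2 * idrFn ε τ t := by
  rw [num_eq]
  apply mul_nonneg hε
  rw [show -t - τ = -(t+τ) by ring, normCDF_neg]
  have := normCDF_mono (show t - τ ≤ t + τ by linarith)
  linarith

lemma tendsto_sqrtlog_mul (c d : ℝ) (hd : 0 < d) :
    Tendsto (fun p : ℕ => Real.sqrt (c * Real.log p) * (p:ℝ)^(-d)) atTop (nhds 0) := by
  have hlog : Tendsto (fun p : ℕ => Real.log p) atTop atTop :=
    Real.tendsto_log_atTop.comp tendsto_natCast_atTop_atTop
  have h1 : Tendsto (fun x : ℝ => Real.log x / x ^ d) atTop (nhds 0) :=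
    (isLittleO_log_rpow_atTop hd).tendsto_div_nhds_zero
  have h2 : Tendsto (fun p : ℕ => Real.log p * (p:ℝ)^(-d)) atTop (nhds 0) := by
    refine (h1.comp (tendsto_natCast_atTop_atTop (R := ℝ))).congr fun p => ?_
    simp [Function.comp, Real.rpow_neg (Nat.cast_nonneg p), div_eq_mul_inv]
  apply squeeze_zero' ?_ ?_ h2
  · exact Filter.Eventually.of_forall fun p =>
      mul_nonneg (Real.sqrt_nonneg _) (Real.rpow_nonneg (Nat.cast_nonneg p) _)
  · filter_upwards [hlog.eventually_ge_atTop (max c 1)] with p hp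
    apply mul_le_mul_of_nonneg_right _ (Real.rpow_nonneg (Nat.cast_nonneg p) _)
    have hL1 : 1 ≤ Real.log p := le_trans (le_max_right _ _) hp
    have hcL : c ≤ Real.log p := le_trans (le_max_left _ _) hp
    calc Real.sqrt (c * Real.log p) ≤ Real.sqrt ((Real.log p)^2) :=
          Real.sqrt_le_sqrt (by nlinarith)
      _ = Real.log p := Real.sqrt_sq (by linarith)

set_option maxHeartbeats 1000000 in
theorem key_bounds (β r : ℝ) (hr1 : 0 < r) (hrβ : r < β) (hβ2 : β < 1) :
    ∃ K > 0, ∀ᶠ p : ℕ in atTop,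
      K * Real.exp (-((β+r)^2/(4*r) * Real.log p)/2)
          ≤ sepFn (epsP β p) (tauP r p) (tP ((β+r)^2/(4*r)) p)
      ∧ sepFn (epsP β p) (tauP r p) (tP ((β+r)^2/(4*r)) p)
          ≤ 2 * tauP r p * Real.exp (-((β+r)^2/(4*r) * Real.log p)/2) := by
  have hβ0 : 0 < β := hr1.trans hrβ
  set q : ℝ := (β+r)^2/(4*r) with hqdef
  have hq0 : 0 < q := div_pos (by positivity) (by linarith)
  have hrq : r < q := by
    rw [hqdef, lt_div_iff₀ (by linarith : (0:ℝ) < 4*r)]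
    nlinarith
  have hsq : Real.sqrt q * Real.sqrt r = (β + r)/2 := by
    rw [← Real.sqrt_mul hq0.le]
    rw [show q * r = ((β+r)/2)^2 by rw [hqdef]; field_simp; ring]
    exact Real.sqrt_sq (by linarith)
  set a : ℝ := Real.sqrt q - Real.sqrt r with hadef
  have ha : 0 < a := sub_pos.mpr (Real.sqrt_lt_sqrt hr1.le hrq)
  have hqq : Real.sqrt q ^ 2 = q := Real.sq_sqrt hq0.le
  have hrr : Real.sqrt r ^ 2 = r := Real.sq_sqrt hr1.le
  have ha2 : β + a^2 = q := by rw [hadef]; linear_combination hqq + hrr - 2*hsq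
  have hb2 : β + (Real.sqrt q + Real.sqrt r)^2 = q + 2*(β+r) := by linear_combination hqq + hrr + 2*hsq
  set C₀ : ℝ := Real.exp (-(3:ℝ)/2) * (Real.sqrt (2*Real.pi))⁻¹ with hC₀def
  have hC₀pos : 0 < C₀ := by
    apply mul_pos (Real.exp_pos _)
    exact inv_pos.mpr (Real.sqrt_pos.mpr (by positivity))
  refine ⟨Real.sqrt r * C₀ / (a * Real.sqrt 2), by positivity, ?_⟩
  have hlog : Tendsto (fun p : ℕ => Real.log p) atTop atTop :=
    Real.tendsto_log_atTop.comp tendsto_natCast_atTop_atTop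
  have ev1 : ∀ᶠ p : ℕ in atTop, 2 ≤ p := eventually_ge_atTop 2
  have ev2 : ∀ᶠ p : ℕ in atTop, 1 ≤ a^2 * (2 * Real.log p) := by
    filter_upwards [hlog.eventually_ge_atTop (1/(2*a^2))] with p hp
    have h2a : 0 < a^2 := by positivity
    rw [div_le_iff₀ (by linarith)] at hp
    calc (1:ℝ) ≤ Real.log p * (2*a^2) := hp
      _ = a^2 * (2*Real.log p) := by ring
  have ev3 : ∀ᶠ p : ℕ in atTop,
      a * (Real.sqrt (2 * Real.log p) * (p:ℝ)^(-(2*(β+r)))) ≤ C₀ := by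
    have h0 := tendsto_sqrtlog_mul 2 (2*(β+r)) (by linarith)
    have h1 : Tendsto (fun p : ℕ =>
        a * (Real.sqrt (2*Real.log p) * (p:ℝ)^(-(2*(β+r))))) atTop (nhds 0) := by
      simpa using h0.const_mul a
    exact h1.eventually_le_const hC₀pos
  filter_upwards [ev1, ev2, ev3] with p hp2 hA hB
  set L := Real.log p with hLdef
  have hp1 : (1:ℝ) < (p:ℝ) := by
    have : (1:ℕ) < p := lt_of_lt_of_le one_lt_two hp2
    exact_mod_cast this
  have hp0 : (0:ℝ) < p := by linarith
  have hL : 0 < L := Real.log_pos hp1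
  have hsqL : Real.sqrt (2*L) ^ 2 = 2*L := Real.sq_sqrt (by linarith)
  have hsqL0 : 0 < Real.sqrt (2*L) := Real.sqrt_pos.mpr (by linarith)
  have hτ : tauP r p = Real.sqrt r * Real.sqrt (2*L) := by
    rw [tauP, show 2*r*L = r*(2*L) by ring, Real.sqrt_mul hr1.le]
  have ht : tP q p = Real.sqrt q * Real.sqrt (2*L) := by
    rw [tP, show 2*q*L = q*(2*L) by ring, Real.sqrt_mul hq0.le]
  have htτ : tP q p - tauP r p = a * Real.sqrt (2*L) := by rw [hτ, ht, hadef]; ring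
  have hx2 : (a * Real.sqrt (2*L))^2 = a^2*(2*L) := by rw [mul_pow, hsqL]
  have hx0 : 0 < a * Real.sqrt (2*L) := mul_pos ha hsqL0
  have htτ1 : 1 ≤ tP q p - tauP r p := by
    rw [htτ]
    nlinarith [hA, hx2, sq_nonneg (a*Real.sqrt (2*L) - 1)]
  have hτ0 : 0 ≤ tauP r p := Real.sqrt_nonneg _
  have hτt : tauP r p ≤ tP q p := by linarith
  have hε : epsP β p = Real.exp (-β * L) := by
    rw [epsP, Real.rpow_def_of_pos hp0, ← hLdef]; ring_nf
  have hε0 : 0 < epsP β p := by rw [hε]; exact Real.exp_pos _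
  have hε1 : epsP β p ≤ 1 := by
    rw [hε, Real.exp_le_one_iff]
    nlinarith [mul_pos hβ0 hL]
  have hkey1 : epsP β p * Real.exp (-(tP q p - tauP r p)^2/2) = Real.exp (-(q*L)) := by
    rw [hε, htτ, ← Real.exp_add, hx2]
    congr 1
    linear_combination (-L) * ha2
  have hkey2 : epsP β p * Real.exp (-(tP q p + tauP r p)^2/2)
      = Real.exp (-(q*L)) * Real.exp (-(2*(β+r))*L) := by
    rw [hε, hτ, ht, ← Real.exp_add, ← Real.exp_add]
    congr 1
    rw [show Real.sqrt q*Real.sqrt (2*L) + Real.sqrt r*Real.sqrt (2*L)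
        = (Real.sqrt q + Real.sqrt r)*Real.sqrt (2*L) by ring, mul_pow, hsqL]
    linear_combination (-L) * hb2
  have hkey3 : Real.exp (-(tP q p)^2/2) = Real.exp (-(q*L)) := by
    rw [ht]
    congr 1
    rw [mul_pow, hsqL]
    linear_combination (-L) * hqq
  have htpr_le : tprFn (epsP β p) (tauP r p) (tP q p) ≤ Real.exp (-(q*L)) := by
    rw [← hkey1, tprFn]
    exact mul_le_mul_of_nonneg_left (psiBar_le hτ0 hτt) hε0.le
  have hfpr_le : fprFn (epsP β p) (tP q p) ≤ Real.exp (-(q*L)) := by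
    rw [← hkey3, fprFn]
    calc (1 - epsP β p) * psiBar 0 (tP q p) ≤ 1 * psiBar 0 (tP q p) :=
          mul_le_mul_of_nonneg_right (by linarith) (psiBar_pos _ _).le
      _ = psiBar 0 (tP q p) := one_mul _
      _ ≤ Real.exp (-(tP q p - 0)^2/2) := psiBar_le le_rfl (by linarith)
      _ = Real.exp (-(tP q p)^2/2) := by rw [sub_zero]
  have htpr_pos : 0 < tprFn (epsP β p) (tauP r p) (tP q p) := mul_pos hε0 (psiBar_pos _ _)
  have hfpr_nonneg : 0 ≤ fprFn (epsP β p) (tP q p) :=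
    mul_nonneg (by linarith) (psiBar_pos _ _).le
  have hD_pos : 0 < tprFn (epsP β p) (tauP r p) (tP q p) + fprFn (epsP β p) (tP q p) := by
    linarith
  have hE : (0:ℝ) < Real.exp (-(q*L)) := Real.exp_pos _
  -- numerator lower bound
  have hg : gaussPDF (tP q p - tauP r p)
      = (Real.sqrt (2*Real.pi))⁻¹ * Real.exp (-(tP q p - tauP r p)^2/2) := by
    rw [gaussPDF]
  have hnum_lb : C₀ / (2*(a*Real.sqrt (2*L))) * Real.exp (-(q*L))
      ≤ tprFn (epsP β p) (tauP r p) (tP q p) - 2*idrFn (epsP β p) (tauP r p) (tP q p) := by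
    refine le_trans ?_ (num_lb hε0.le hτ0 htτ1)
    have e1 : epsP β p * (Real.exp (-(3:ℝ)/2) * gaussPDF (tP q p - tauP r p) / (tP q p - tauP r p)
          - (1/2) * Real.exp (-(tP q p + tauP r p)^2/2))
        = C₀ * Real.exp (-(q*L)) / (a*Real.sqrt (2*L))
          - (1/2) * (Real.exp (-(q*L)) * Real.exp (-(2*(β+r))*L)) := by
      have eA : epsP β p * (Real.exp (-(3:ℝ)/2) * gaussPDF (tP q p - tauP r p))
          = C₀ * Real.exp (-(q*L)) := by
        rw [hg, ← hkey1, hC₀def]; ring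
      calc epsP β p * (Real.exp (-(3:ℝ)/2) * gaussPDF (tP q p - tauP r p) / (tP q p - tauP r p)
            - (1/2) * Real.exp (-(tP q p + tauP r p)^2/2))
          = (epsP β p * (Real.exp (-(3:ℝ)/2) * gaussPDF (tP q p - tauP r p))) / (tP q p - tauP r p)
            - (1/2) * (epsP β p * Real.exp (-(tP q p + tauP r p)^2/2)) := by ring
        _ = C₀ * Real.exp (-(q*L)) / (a*Real.sqrt (2*L))
            - (1/2) * (Real.exp (-(q*L)) * Real.exp (-(2*(β+r))*L)) := by
            rw [eA, hkey2, htτ]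
    rw [e1]
    have hM : Real.exp (-(2*(β+r))*L) * (a*Real.sqrt (2*L)) ≤ C₀ := by
      have hpm : ((p:ℝ))^(-(2*(β+r))) = Real.exp (-(2*(β+r))*L) := by
        rw [Real.rpow_def_of_pos hp0, ← hLdef]; ring_nf
      rw [hpm] at hB
      calc Real.exp (-(2*(β+r))*L) * (a*Real.sqrt (2*L))
          = a * (Real.sqrt (2*L) * Real.exp (-(2*(β+r))*L)) := by ring
        _ ≤ C₀ := hB
    have step : (1/2) * (Real.exp (-(q*L)) * Real.exp (-(2*(β+r))*L))
        ≤ C₀ * Real.exp (-(q*L)) / (2*(a*Real.sqrt (2*L))) := by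
      rw [le_div_iff₀ (by positivity)]
      calc (1/2) * (Real.exp (-(q*L)) * Real.exp (-(2*(β+r))*L)) * (2*(a*Real.sqrt (2*L)))
          = (Real.exp (-(2*(β+r))*L) * (a*Real.sqrt (2*L))) * Real.exp (-(q*L)) := by ring
        _ ≤ C₀ * Real.exp (-(q*L)) := mul_le_mul_of_nonneg_right hM hE.le
    have split : C₀ * Real.exp (-(q*L)) / (a*Real.sqrt (2*L))
        - C₀ * Real.exp (-(q*L)) / (2*(a*Real.sqrt (2*L)))
        = C₀ / (2*(a*Real.sqrt (2*L))) * Real.exp (-(q*L)) := by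
      field_simp
      ring
    linarith [split, step]
  have hnum_lb0 : (0:ℝ) ≤ C₀ / (2*(a*Real.sqrt (2*L))) * Real.exp (-(q*L)) := by positivity
  -- sqrt of denominator bounds
  have hsqrtD_le : Real.sqrt (tprFn (epsP β p) (tauP r p) (tP q p) + fprFn (epsP β p) (tP q p))
      ≤ Real.sqrt 2 * Real.exp (-(q*L)/2) := by
    calc Real.sqrt (tprFn (epsP β p) (tauP r p) (tP q p) + fprFn (epsP β p) (tP q p))
        ≤ Real.sqrt (2 * Real.exp (-(q*L))) := Real.sqrt_le_sqrt (by linarith)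
      _ = Real.sqrt 2 * Real.sqrt (Real.exp (-(q*L))) := Real.sqrt_mul (by norm_num) _
      _ = Real.sqrt 2 * Real.exp (-(q*L)/2) := by rw [sqrt_exp']
  have hsqrtD_pos : 0 < Real.sqrt (tprFn (epsP β p) (tauP r p) (tP q p) + fprFn (epsP β p) (tP q p)) :=
    Real.sqrt_pos.mpr hD_pos
  constructor
  · -- lower bound on sep
    have h1 : C₀ / (2*(a*Real.sqrt (2*L))) * Real.exp (-(q*L)) / (Real.sqrt 2 * Real.exp (-(q*L)/2))
        ≤ (tprFn (epsP β p) (tauP r p) (tP q p) - 2*idrFn (epsP β p) (tauP r p) (tP q p))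
          / Real.sqrt (tprFn (epsP β p) (tauP r p) (tP q p) + fprFn (epsP β p) (tP q p)) :=
      div_le_div₀ (le_trans hnum_lb0 hnum_lb) hnum_lb hsqrtD_pos hsqrtD_le
    calc Real.sqrt r * C₀ / (a * Real.sqrt 2) * Real.exp (-(q*L)/2)
        = 2 * tauP r p * (C₀ / (2*(a*Real.sqrt (2*L))) * Real.exp (-(q*L)) / (Real.sqrt 2 * Real.exp (-(q*L)/2))) := by
          rw [hτ, show Real.exp (-(q*L)) = Real.exp (-(q*L)/2) * Real.exp (-(q*L)/2) by
            rw [← Real.exp_add]; ring_nf]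
          have h2 : Real.sqrt 2 ≠ 0 := by positivity
          have h3 : Real.exp (-(q*L)/2) ≠ 0 := Real.exp_ne_zero _
          field_simp
      _ ≤ 2 * tauP r p * ((tprFn (epsP β p) (tauP r p) (tP q p) - 2*idrFn (epsP β p) (tauP r p) (tP q p))
          / Real.sqrt (tprFn (epsP β p) (tauP r p) (tP q p) + fprFn (epsP β p) (tP q p))) :=
          mul_le_mul_of_nonneg_left h1 (by positivity)
      _ = sepFn (epsP β p) (tauP r p) (tP q p) := by rw [sepFn]; ring
  · -- upper bound on sep
    have h2 : (tprFn (epsP β p) (tauP r p) (tP q p) - 2*idrFn (epsP β p) (tauP r p) (tP q p))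
          / Real.sqrt (tprFn (epsP β p) (tauP r p) (tP q p) + fprFn (epsP β p) (tP q p))
        ≤ tprFn (epsP β p) (tauP r p) (tP q p) / Real.sqrt (tprFn (epsP β p) (tauP r p) (tP q p)) :=
      div_le_div₀ htpr_pos.le (num_ub hε0.le) (Real.sqrt_pos.mpr htpr_pos)
        (Real.sqrt_le_sqrt (by linarith))
    have h3 : tprFn (epsP β p) (tauP r p) (tP q p) / Real.sqrt (tprFn (epsP β p) (tauP r p) (tP q p))
        = Real.sqrt (tprFn (epsP β p) (tauP r p) (tP q p)) := Real.div_sqrt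
    have h4 : Real.sqrt (tprFn (epsP β p) (tauP r p) (tP q p)) ≤ Real.exp (-(q*L)/2) := by
      rw [← sqrt_exp']
      exact Real.sqrt_le_sqrt htpr_le
    calc sepFn (epsP β p) (tauP r p) (tP q p)
        = 2 * tauP r p * ((tprFn (epsP β p) (tauP r p) (tP q p) - 2*idrFn (epsP β p) (tauP r p) (tP q p))
          / Real.sqrt (tprFn (epsP β p) (tauP r p) (tP q p) + fprFn (epsP β p) (tP q p))) := by
          rw [sepFn]; ring
      _ ≤ 2 * tauP r p * (tprFn (epsP β p) (tauP r p) (tP q p) / Real.sqrt (tprFn (epsP β p) (tauP r p) (tP q p))) :=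
          mul_le_mul_of_nonneg_left h2 (by positivity)
      _ = 2 * tauP r p * Real.sqrt (tprFn (epsP β p) (tauP r p) (tP q p)) := by rw [h3]
      _ ≤ 2 * tauP r p * Real.exp (-(q*L)/2) :=
          mul_le_mul_of_nonneg_left h4 (by positivity)

set_option maxHeartbeats 1000000 in
/-- Phase diagram for FDR thresholding t_p(q₂), q₂ = (β+r)²/(4r); its success
region r > (1−√(1−β))² is strictly smaller than the ideal one for 1/2 < β < 3/4. -/
theorem stmt9 (β r : ℝ) (hr1 : 0 < r) (hrβ : r < β) (hβ2 : β < 1) :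
    ((1 - Real.sqrt (1 - β)) ^ 2 < r →
      Filter.Tendsto
        (fun p : ℕ => Real.sqrt p * sepFn (epsP β p) (tauP r p) (tP ((β + r) ^ 2 / (4 * r)) p))
        Filter.atTop Filter.atTop) ∧
    (r < (1 - Real.sqrt (1 - β)) ^ 2 →
      Filter.Tendsto
        (fun p : ℕ => Real.sqrt p * sepFn (epsP β p) (tauP r p) (tP ((β + r) ^ 2 / (4 * r)) p))
        Filter.atTop (nhds 0)) ∧
    (∀ β' : ℝ, 1 / 2 < β' → β' < 3 / 4 → rhoStar β' < (1 - Real.sqrt (1 - β')) ^ 2) := by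
  have hβ0 : 0 < β := hr1.trans hrβ
  have hr2 : r < 1 := hrβ.trans hβ2
  set q : ℝ := (β+r)^2/(4*r) with hqdef
  obtain ⟨K, hK, hmain⟩ := key_bounds β r hr1 hrβ hβ2
  have hlog : Tendsto (fun p : ℕ => Real.log p) atTop atTop :=
    Real.tendsto_log_atTop.comp tendsto_natCast_atTop_atTop
  have hs2 : Real.sqrt (1-β)^2 = 1-β := Real.sq_sqrt (by linarith)
  have hs0 : 0 ≤ Real.sqrt (1-β) := Real.sqrt_nonneg _
  have hs1 : Real.sqrt (1-β) < 1 := by nlinarith [hs2, hs0]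
  have hu2 : Real.sqrt r^2 = r := Real.sq_sqrt hr1.le
  have hu0 : 0 ≤ Real.sqrt r := Real.sqrt_nonneg _
  have hu1 : Real.sqrt r < 1 := by nlinarith [hu2, hu0]
  have hsp : ∀ p : ℕ, 1 ≤ p → Real.sqrt (p:ℝ) = Real.exp (Real.log p / 2) := by
    intro p hp1
    have hp0 : (0:ℝ) < p := by exact_mod_cast Nat.lt_of_lt_of_le Nat.zero_lt_one hp1
    calc Real.sqrt (p:ℝ) = Real.sqrt (Real.exp (Real.log p)) := by rw [Real.exp_log hp0]
      _ = Real.exp (Real.log p / 2) := sqrt_exp' _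
  refine ⟨?_, ?_, ?_⟩
  · intro hyp
    have hq1 : q < 1 := by
      rw [hqdef, div_lt_one (by linarith)]
      rw [← hu2] at hyp
      have k1 : 1 - Real.sqrt (1-β) < Real.sqrt r := lt_of_pow_lt_pow_left₀ 2 hu0 hyp
      have e1 : 0 < Real.sqrt (1-β) - (1 - Real.sqrt r) := by linarith
      have e2 : 0 < Real.sqrt (1-β) + (1 - Real.sqrt r) := by linarith
      have k2 : (1 - Real.sqrt r)^2 < Real.sqrt (1-β)^2 := by nlinarith [mul_pos e1 e2]
      have k3 : β + r < 2*Real.sqrt r := by nlinarith [k2, hs2, hu2]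
      have k4 : 0 < β + r := by linarith
      have h6 : 0 < 2*Real.sqrt r := by linarith
      have h5 := mul_lt_mul_of_pos_left k3 k4
      have h7 := mul_lt_mul_of_pos_right k3 h6
      nlinarith [h5, h7, hu2]
    have hf : Tendsto (fun p : ℕ => K * Real.exp ((1-q)/2 * Real.log p)) atTop atTop := by
      have t1 : Tendsto (fun p : ℕ => (1-q)/2 * Real.log p) atTop atTop :=
        hlog.const_mul_atTop (by linarith)
      have t2 := Real.tendsto_exp_atTop.comp t1
      simpa [Function.comp] using Tendsto.const_mul_atTop hK t2
    apply tendsto_atTop_mono' atTop ?_ hf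
    filter_upwards [hmain, eventually_ge_atTop 1] with p hp hp1
    calc K * Real.exp ((1-q)/2 * Real.log p)
        = Real.exp (Real.log p / 2) * (K * Real.exp (-(q * Real.log p)/2)) := by
          rw [show (1-q)/2 * Real.log p = Real.log p/2 + (-(q*Real.log p)/2) by ring,
            Real.exp_add]; ring
      _ ≤ Real.sqrt p * sepFn (epsP β p) (tauP r p) (tP q p) := by
          rw [hsp p hp1]
          exact mul_le_mul_of_nonneg_left hp.1 (Real.exp_pos _).le
  · intro hyp
    have hq1 : 1 < q := by
      rw [hqdef, lt_div_iff₀ (by linarith)]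
      rw [← hu2] at hyp
      have k1 : Real.sqrt r < 1 - Real.sqrt (1-β) := lt_of_pow_lt_pow_left₀ 2 (by linarith) hyp
      have e1 : 0 < (1 - Real.sqrt r) - Real.sqrt (1-β) := by linarith
      have e2 : 0 < (1 - Real.sqrt r) + Real.sqrt (1-β) := by linarith
      have k2 : Real.sqrt (1-β)^2 < (1 - Real.sqrt r)^2 := by nlinarith [mul_pos e1 e2]
      have k3 : 2*Real.sqrt r < β + r := by nlinarith [k2, hs2, hu2]
      have h5 := mul_lt_mul_of_pos_left k3 (show (0:ℝ) < β + r by linarith)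
      have h7 := mul_lt_mul_of_pos_right k3 (by positivity : (0:ℝ) < 2*Real.sqrt r + 1)
      nlinarith [h5, hu2, mul_lt_mul_of_pos_right k3 (show (0:ℝ) < 2*Real.sqrt r by nlinarith [hu2])]
    have hg0 : Tendsto (fun p : ℕ =>
        2 * (Real.sqrt (2*r*Real.log p) * (p:ℝ)^(-((q-1)/2)))) atTop (nhds 0) := by
      have := (tendsto_sqrtlog_mul (2*r) ((q-1)/2) (by linarith)).const_mul (2:ℝ)
      simpa using this
    refine squeeze_zero' ?_ ?_ hg0
    · filter_upwards [hmain] with p hp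
      have h0 : (0:ℝ) ≤ K * Real.exp (-(q*Real.log p)/2) := by positivity
      exact mul_nonneg (Real.sqrt_nonneg _) (le_trans h0 hp.1)
    · filter_upwards [hmain, eventually_ge_atTop 1] with p hp hp1
      have hp0 : (0:ℝ) < p := by exact_mod_cast Nat.lt_of_lt_of_le Nat.zero_lt_one hp1
      calc Real.sqrt p * sepFn (epsP β p) (tauP r p) (tP q p)
          ≤ Real.sqrt p * (2 * tauP r p * Real.exp (-(q*Real.log p)/2)) :=
            mul_le_mul_of_nonneg_left hp.2 (Real.sqrt_nonneg _)
        _ = 2 * (Real.sqrt (2*r*Real.log p) * (p:ℝ)^(-((q-1)/2))) := by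
            rw [hsp p hp1, tauP, Real.rpow_def_of_pos hp0,
              show Real.log p * (-((q-1)/2)) = Real.log p/2 + (-(q*Real.log p)/2) by ring,
              Real.exp_add]
            ring
  · intro β' h1 h2
    rw [rhoStar, if_neg (not_le.mpr h1), if_pos (le_of_lt h2)]
    have hs2' : Real.sqrt (1-β')^2 = 1-β' := Real.sq_sqrt (by linarith)
    have hs : 1/2 < Real.sqrt (1-β') := by
      nlinarith [hs2', Real.sqrt_nonneg (1-β')]
    nlinarith [mul_pos (sub_pos.mpr hs) (sub_pos.mpr hs), hs2']
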